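/- arXiv:1906.10076 — 2 statements merged into one kernel-verified Lean document; each statement's English description precedes it below -/
import Mathlib

section
/- For all σ > 0, 0 ≤ ρ ≤ 1, and real numbers ξ₁, ξ₂, we have e^{σ|ξ₁|} e^{σ|ξ₂|} − e^{σ|ξ₁+ξ₂|} ≤ (2σ min{|ξ₁|, |ξ₂|})^ρ e^{σ|ξ₁|} e^{σ|ξ₂|}. -/
lemma min_one_le_rpow {x ρ : ℝ} (hx : 0 ≤ x) (hρ0 : 0 ≤ ρ) (hρ1 : ρ ≤ 1) :
    min 1 x ≤ x ^ ρ := by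
  rcases eq_or_lt_of_le hx with h | h
  · rw [← h]
    exact le_trans (min_le_right _ _) (Real.rpow_nonneg le_rfl _)
  rcases le_total x 1 with hx1 | hx1
  · calc min 1 x ≤ x := min_le_right _ _
    _ = x ^ (1:ℝ) := (Real.rpow_one x).symm
    _ ≤ x ^ ρ := Real.rpow_le_rpow_of_exponent_ge h hx1 hρ1
  · calc min 1 x ≤ 1 := min_le_left _ _
    _ ≤ x ^ ρ := Real.one_le_rpow hx1 hρ0

theorem stmt_0 (σ ρ ξ₁ ξ₂ : ℝ) (hσ : 0 < σ) (hρ0 : 0 ≤ ρ) (hρ1 : ρ ≤ 1) :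
    Real.exp (σ * |ξ₁|) * Real.exp (σ * |ξ₂|) - Real.exp (σ * |ξ₁ + ξ₂|) ≤
      (2 * σ * min |ξ₁| |ξ₂|) ^ ρ * (Real.exp (σ * |ξ₁|) * Real.exp (σ * |ξ₂|)) := by
  set m := min |ξ₁| |ξ₂| with hm
  have hm0 : 0 ≤ m := le_min (abs_nonneg _) (abs_nonneg _)
  have hkey : |ξ₁| + |ξ₂| - 2 * m ≤ |ξ₁ + ξ₂| := by
    rcases min_cases |ξ₁| |ξ₂| with ⟨h1, _⟩ | ⟨h1, _⟩ <;> rw [hm, h1]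
    · have := abs_sub_abs_le_abs_sub ξ₂ (-ξ₁)
      simp at this
      rw [add_comm ξ₂ ξ₁] at this
      linarith [this]
    · have := abs_sub_abs_le_abs_sub ξ₁ (-ξ₂)
      simp at this
      linarith [this]
  set A := Real.exp (σ * |ξ₁|) * Real.exp (σ * |ξ₂|) with hA
  have hAexp : A = Real.exp (σ * (|ξ₁| + |ξ₂|)) := by
    rw [hA, ← Real.exp_add]; ring_nf
  have hApos : 0 < A := by rw [hAexp]; exact Real.exp_pos _
  have h1 : A - Real.exp (σ * |ξ₁ + ξ₂|) ≤ A * (1 - Real.exp (-(2 * σ * m))) := by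
    have : A * Real.exp (-(2 * σ * m)) ≤ Real.exp (σ * |ξ₁ + ξ₂|) := by
      rw [hAexp, ← Real.exp_add]
      apply Real.exp_le_exp.2
      nlinarith [hkey]
    nlinarith [this]
  have h2 : 1 - Real.exp (-(2 * σ * m)) ≤ min 1 (2 * σ * m) := by
    have e1 : 1 - Real.exp (-(2 * σ * m)) ≤ 2 * σ * m := by
      have := Real.add_one_le_exp (-(2 * σ * m)); linarith
    have e2 : 1 - Real.exp (-(2 * σ * m)) ≤ 1 := by
      have := (Real.exp_pos (-(2 * σ * m))).le; linarith
    exact le_min e2 e1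
  have h3 : min 1 (2 * σ * m) ≤ (2 * σ * m) ^ ρ :=
    min_one_le_rpow (by positivity) hρ0 hρ1
  calc A - Real.exp (σ * |ξ₁ + ξ₂|) ≤ A * (1 - Real.exp (-(2 * σ * m))) := h1
  _ ≤ A * ((2 * σ * m) ^ ρ) := by
      apply mul_le_mul_of_nonneg_left (le_trans h2 h3) hApos.le
  _ = (2 * σ * m) ^ ρ * A := mul_comm _ _
end

section
/- Let p(ξ) = α ξ³ − β ξ⁵ with β ≠ 0. If ξ₁ + ξ₂ + ξ₃ = 0 and N_max = max{|ξ₁|,|ξ₂|,|ξ₃|} is sufficiently large (depending only on α, β), then |p(ξ₁) + p(ξ₂) + p(ξ₃)| ≥ c N_max⁴ N_min for some constant c > 0 depending only on α and β, where N_min = min{|ξ₁|,|ξ₂|,|ξ₃|}. -/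
set_option maxHeartbeats 800000 in
theorem stmt_6 (α β : ℝ) (hβ : β ≠ 0) :
    ∃ c > 0, ∃ N₀ > 0, ∀ ξ₁ ξ₂ ξ₃ : ℝ, ξ₁ + ξ₂ + ξ₃ = 0 →
      N₀ ≤ max (max |ξ₁| |ξ₂|) |ξ₃| →
      c * (max (max |ξ₁| |ξ₂|) |ξ₃|) ^ 4 * min (min |ξ₁| |ξ₂|) |ξ₃| ≤
        |(α * ξ₁ ^ 3 - β * ξ₁ ^ 5) + (α * ξ₂ ^ 3 - β * ξ₂ ^ 5) +
          (α * ξ₃ ^ 3 - β * ξ₃ ^ 5)| := by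
  have hb : (0:ℝ) < |β| := abs_pos.mpr hβ
  set t : ℝ := 12 * |α| / (5 * |β|) with ht
  have ht0 : 0 ≤ t := by positivity
  refine ⟨|β| / 2, by positivity, Real.sqrt t + 1, by positivity, ?_⟩
  intro ξ₁ ξ₂ ξ₃ hsum hN
  have key : (α * ξ₁ ^ 3 - β * ξ₁ ^ 5) + (α * ξ₂ ^ 3 - β * ξ₂ ^ 5) +
      (α * ξ₃ ^ 3 - β * ξ₃ ^ 5) =
      ξ₁ * ξ₂ * ξ₃ * (3 * α - 5 * β / 2 * (ξ₁ ^ 2 + ξ₂ ^ 2 + ξ₃ ^ 2)) := by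
    have h3 : ξ₃ = -ξ₁ - ξ₂ := by linarith
    subst h3; ring
  set A := |ξ₁| with hA
  set B := |ξ₂| with hB
  set C := |ξ₃| with hC
  set M := max (max A B) C with hM
  set m := min (min A B) C with hm
  have hA0 : 0 ≤ A := abs_nonneg _
  have hB0 : 0 ≤ B := abs_nonneg _
  have hC0 : 0 ≤ C := abs_nonneg _
  have hmA : m ≤ A := le_trans (min_le_left _ _) (min_le_left _ _)
  have hmB : m ≤ B := le_trans (min_le_left _ _) (min_le_right _ _)
  have hmC : m ≤ C := min_le_right _ _
  have hAM : A ≤ M := le_trans (le_max_left _ _) (le_max_left _ _)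
  have hBM : B ≤ M := le_trans (le_max_right _ _) (le_max_left _ _)
  have hCM : C ≤ M := le_max_right _ _
  have hm0 : 0 ≤ m := le_min (le_min hA0 hB0) hC0
  have hM0 : 0 ≤ M := le_trans hA0 hAM
  -- triangle inequalities
  have tri1 : C ≤ A + B := by
    have : ξ₃ = -(ξ₁ + ξ₂) := by linarith
    rw [hC, this, abs_neg]; exact abs_add_le _ _
  have tri2 : A ≤ B + C := by
    have : ξ₁ = -(ξ₂ + ξ₃) := by linarith
    rw [hA, this, abs_neg]; exact abs_add_le _ _
  have tri3 : B ≤ A + C := by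
    have : ξ₂ = -(ξ₁ + ξ₃) := by linarith
    rw [hB, this, abs_neg]; exact abs_add_le _ _
  -- product lower bound
  have hprod : m * M ^ 2 / 2 ≤ A * B * C := by
    rcases max_cases (max A B) C with ⟨h1, _⟩ | ⟨h1, _⟩
    · rcases max_cases A B with ⟨h2, _⟩ | ⟨h2, _⟩
      · have hMa : M = A := by rw [hM, h1, h2]
        rw [hMa]
        linarith [mul_le_mul_of_nonneg_left tri2 (mul_nonneg hm0 hA0),
          mul_le_mul_of_nonneg_right hmC (mul_nonneg hA0 hB0),
          mul_le_mul_of_nonneg_right hmB (mul_nonneg hA0 hC0)]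
      · have hMb : M = B := by rw [hM, h1, h2]
        rw [hMb]
        linarith [mul_le_mul_of_nonneg_left tri3 (mul_nonneg hm0 hB0),
          mul_le_mul_of_nonneg_right hmC (mul_nonneg hA0 hB0),
          mul_le_mul_of_nonneg_right hmA (mul_nonneg hB0 hC0)]
    · have hMc : M = C := by rw [hM, h1]
      rw [hMc]
      linarith [mul_le_mul_of_nonneg_left tri1 (mul_nonneg hm0 hC0),
        mul_le_mul_of_nonneg_right hmB (mul_nonneg hA0 hC0),
        mul_le_mul_of_nonneg_right hmA (mul_nonneg hB0 hC0)]
  -- sum of squares lower bound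
  have hS : M ^ 2 ≤ A ^ 2 + B ^ 2 + C ^ 2 := by
    rcases max_cases (max A B) C with ⟨h1, _⟩ | ⟨h1, _⟩
    · rcases max_cases A B with ⟨h2, _⟩ | ⟨h2, _⟩
      · have hMa : M = A := by rw [hM, h1, h2]
        rw [hMa]; nlinarith [sq_nonneg B, sq_nonneg C]
      · have hMb : M = B := by rw [hM, h1, h2]
        rw [hMb]; nlinarith [sq_nonneg A, sq_nonneg C]
    · have hMc : M = C := by rw [hM, h1]
      rw [hMc]; nlinarith [sq_nonneg A, sq_nonneg B]
  -- M^2 is large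
  have hM2 : t ≤ M ^ 2 := by
    have h1 : Real.sqrt t ≤ M := by nlinarith [Real.sqrt_nonneg t]
    nlinarith [Real.sq_sqrt ht0, Real.sqrt_nonneg t]
  have hM2' : 12 * |α| ≤ 5 * |β| * M ^ 2 := by
    rw [ht, div_le_iff₀ (by positivity)] at hM2
    linarith
  -- lower bound for the second factor
  set S : ℝ := ξ₁ ^ 2 + ξ₂ ^ 2 + ξ₃ ^ 2 with hSdef
  have hSabs : S = A ^ 2 + B ^ 2 + C ^ 2 := by
    rw [hSdef, hA, hB, hC, sq_abs, sq_abs, sq_abs]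
  have hF : 5 / 4 * |β| * M ^ 2 ≤ |3 * α - 5 * β / 2 * S| := by
    have h1 : |5 * β / 2 * S| - |3 * α| ≤ |3 * α - 5 * β / 2 * S| := by
      rw [abs_sub_comm]
      exact abs_sub_abs_le_abs_sub _ _
    have hS0 : 0 ≤ S := by rw [hSabs]; positivity
    have h2 : |5 * β / 2 * S| = 5 / 2 * |β| * S := by
      rw [abs_mul, abs_of_nonneg hS0, show (5 * β / 2 : ℝ) = 5 / 2 * β by ring,
        abs_mul]
      norm_num
    have h3 : |3 * α| = 3 * |α| := by rw [abs_mul]; simp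
    have hSM : M ^ 2 ≤ S := by rw [hSabs]; exact hS
    nlinarith
  -- combine
  rw [key, abs_mul, abs_mul, abs_mul, ← hA, ← hB, ← hC]
  have habs0 : 0 ≤ |3 * α - 5 * β / 2 * S| := abs_nonneg _
  have := mul_le_mul hprod hF (by positivity) (by positivity : (0:ℝ) ≤ A * B * C)
  linarith [mul_nonneg (mul_nonneg hm0 hb.le) (pow_nonneg hM0 4)]
end
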